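/- There is an absolute constant (namely 30) such that the following holds. Let L ≥ 2ε ≥ 0. Let T̂ be a finite tree on vertex set X with nonnegative edge lengths and associated tree metric d̂, and let V ⊆ X be nonempty; suppose every vertex in X ∖ V has degree at least 3 in T̂. Let T be a finite tree on vertex set V with nonnegative edge lengths, each at most L, and associated tree metric d, and suppose |d(u, v) − d̂(u, v)| ≤ (d(u, v)/L + 1)·ε for all u, v ∈ V. Then every vertex x ∈ X has some v ∈ V with d̂(x, v) ≤ 30ε. -/

import Mathlib

open SimpleGraph

/-- `d` is the tree metric on the tree `G` with (nonnegative, symmetric) edge lengths `ℓ`: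
the distance between two vertices is the sum of the edge lengths along any (hence, in a tree,
the unique) path between them. -/
def IsTreeMetric {V : Type*} (G : SimpleGraph V) (ℓ : V → V → ℝ) (d : V → V → ℝ) : Prop :=
  G.IsTree ∧ (∀ u v : V, G.Adj u v → ℓ u v = ℓ v u) ∧ (∀ u v : V, G.Adj u v → 0 ≤ ℓ u v) ∧
  ∀ (u v : V) (p : G.Walk u v), p.IsPath →
    d u v = (p.darts.map fun dd => ℓ dd.fst dd.snd).sum

namespace SteinerAux

variable {α : Type*} {G : SimpleGraph α} {ℓ' d' : α → α → ℝ}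

/-- The length of a walk with respect to edge lengths `ℓ'`. -/
def wsum (ℓ' : α → α → ℝ) {u v : α} (p : G.Walk u v) : ℝ :=
  (p.darts.map fun dd => ℓ' dd.fst dd.snd).sum

lemma wsum_append (ℓ' : α → α → ℝ) {u v w : α} (p : G.Walk u v) (q : G.Walk v w) :
    wsum ℓ' (p.append q) = wsum ℓ' p + wsum ℓ' q := by
  simp [wsum, Walk.darts_append]

lemma wsum_edge (ℓ' : α → α → ℝ) {u v : α} (h : G.Adj u v) :
    wsum ℓ' (Walk.cons h Walk.nil) = ℓ' u v := by
  simp [wsum]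

lemma exists_path (h : G.Connected) (u v : α) : ∃ p : G.Walk u v, p.IsPath := by
  classical
  obtain ⟨w⟩ := h.preconnected u v
  exact ⟨w.bypass, w.bypass_isPath⟩

lemma tm_eval (htm : IsTreeMetric G ℓ' d') {u v : α} (p : G.Walk u v) (hp : p.IsPath) :
    d' u v = wsum ℓ' p := htm.2.2.2 u v p hp

lemma tm_nonneg (htm : IsTreeMetric G ℓ' d') (u v : α) : 0 ≤ d' u v := by
  obtain ⟨p, hp⟩ := exists_path htm.1.isConnected u v
  rw [tm_eval htm p hp]
  apply List.sum_nonneg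
  intro r hr
  simp only [List.mem_map] at hr
  obtain ⟨dd, _, rfl⟩ := hr
  exact htm.2.2.1 _ _ dd.adj

lemma tm_refl (htm : IsTreeMetric G ℓ' d') (u : α) : d' u u = 0 := by
  have h := tm_eval htm (Walk.nil : G.Walk u u) (by simp)
  simpa [wsum] using h

lemma tm_symm (htm : IsTreeMetric G ℓ' d') (u v : α) : d' u v = d' v u := by
  obtain ⟨p, hp⟩ := exists_path htm.1.isConnected u v
  rw [tm_eval htm p hp, tm_eval htm p.reverse hp.reverse]
  simp only [wsum, Walk.darts_reverse, List.map_map, List.map_reverse, List.sum_reverse]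
  congr 1
  refine List.map_congr_left fun dd _ => ?_
  simp only [Function.comp_apply, Dart.symm_toProd, Prod.fst_swap, Prod.snd_swap]
  exact htm.2.1 _ _ dd.adj

lemma tm_split (htm : IsTreeMetric G ℓ' d') {u v w : α} (p : G.Walk u v) (hp : p.IsPath)
    (hw : w ∈ p.support) : d' u w + d' w v = d' u v := by
  classical
  rw [tm_eval htm _ (hp.takeUntil hw), tm_eval htm _ (hp.dropUntil hw), tm_eval htm p hp,
    ← wsum_append]
  exact congrArg (wsum ℓ') (Walk.take_spec p hw)

lemma tm_adj (htm : IsTreeMetric G ℓ' d') {u v : α} (h : G.Adj u v) : d' u v = ℓ' u v := by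
  have hp : (Walk.cons h Walk.nil).IsPath := by
    rw [Walk.cons_isPath_iff]; simp [h.ne]
  rw [tm_eval htm _ hp, wsum_edge]

/-- `u` and `v` lie in the same component of `G` minus `x`
(there is a path between them avoiding `x`). -/
def Same (G : SimpleGraph α) (x u v : α) : Prop :=
  ∃ p : G.Walk u v, p.IsPath ∧ x ∉ p.support

lemma Same.ne_left {x u v : α} (h : Same G x u v) : u ≠ x := by
  obtain ⟨p, _, hx⟩ := h
  exact fun he => hx (by rw [← he]; exact p.start_mem_support)

lemma same_refl {x u : α} (h : u ≠ x) : Same G x u u :=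
  ⟨Walk.nil, by simp, by simp [Ne.symm h]⟩

lemma Same.symm {x u v : α} (h : Same G x u v) : Same G x v u := by
  obtain ⟨p, hp, hx⟩ := h
  exact ⟨p.reverse, hp.reverse, by simpa [Walk.support_reverse] using hx⟩

lemma Same.trans {x u v w : α} (h1 : Same G x u v) (h2 : Same G x v w) : Same G x u w := by
  classical
  obtain ⟨p, hp, hxp⟩ := h1
  obtain ⟨q, hq, hxq⟩ := h2
  refine ⟨(p.append q).bypass, Walk.bypass_isPath _, fun hx => ?_⟩
  have hm := Walk.support_bypass_subset _ hx
  rw [Walk.mem_support_append_iff] at hm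
  tauto

lemma not_same_split (htm : IsTreeMetric G ℓ' d') {x u v : α}
    (h : ¬ Same G x u v) : d' u x + d' x v = d' u v := by
  obtain ⟨p, hp⟩ := exists_path htm.1.isConnected u v
  have hx : x ∈ p.support := by
    by_contra hx
    exact h ⟨p, hp, hx⟩
  exact tm_split htm p hp hx

lemma adj_same {x u v : α} (h : G.Adj u v) (hu : u ≠ x) (hv : v ≠ x) : Same G x u v := by
  refine ⟨Walk.cons h Walk.nil, ?_, ?_⟩
  · rw [Walk.cons_isPath_iff]; simp [h.ne]
  · simp [Walk.support_cons, Ne.symm hu, Ne.symm hv]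

lemma neighbors_not_same (hG : G.IsTree) {x y1 y2 : α} (h1 : G.Adj x y1) (h2 : G.Adj x y2)
    (hne : y1 ≠ y2) : ¬ Same G x y1 y2 := by
  rintro ⟨p, hp, hxp⟩
  have c1 : (Walk.cons h1 p).IsPath := by rw [Walk.cons_isPath_iff]; exact ⟨hp, hxp⟩
  have c2 : (Walk.cons h2 (Walk.nil : G.Walk y2 y2)).IsPath := by
    rw [Walk.cons_isPath_iff]; simp [h2.ne]
  have he := (hG.existsUnique_path x y2).unique c1 c2
  have hy1 : y1 ∈ (Walk.cons h1 p).support := by simp [Walk.support_cons]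
  rw [he] at hy1
  simp only [Walk.support_cons, Walk.support_nil, List.mem_cons, List.mem_singleton,
    List.not_mem_nil, or_false] at hy1
  rcases hy1 with h | h
  · exact h1.ne' h
  · exact hne h

lemma exists_change {G : SimpleGraph α} (Q : α → Prop) :
    ∀ {u v : α}, G.Walk u v → Q u → ¬ Q v → ∃ z1 z2 : α, G.Adj z1 z2 ∧ Q z1 ∧ ¬ Q z2
  | _, _, Walk.nil, hu, hv => absurd hu hv
  | u, v, @Walk.cons _ _ _ b _ h q, hu, hv =>
    Classical.byCases (fun hb : Q b => exists_change Q q hb hv)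
      (fun hb => ⟨u, b, h, hu, hb⟩)

lemma exists_branch (hG : G.IsTree) {x v : α} (hv : v ≠ x) : ∃ y, G.Adj x y ∧ Same G x v y := by
  obtain ⟨p, hp⟩ := exists_path hG.isConnected x v
  cases p with
  | nil => exact absurd rfl hv
  | @cons _ b _ h q =>
    rw [Walk.cons_isPath_iff] at hp
    exact ⟨b, h, Same.symm ⟨q, hp.1, hp.2⟩⟩

lemma branch_has_V [Finite α] (hG : G.IsTree) (V : Set α) {x : α}
    (hdeg : ∀ z, z ∉ V → 3 ≤ (G.neighborSet z).ncard) {y : α} (hy : G.Adj x y) :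
    ∃ v ∈ V, Same G x v y := by
  classical
  have hpc : ∀ z : α, ∃ p : G.Walk x z, p.IsPath := fun z => exists_path hG.isConnected x z
  let pc : ∀ z : α, G.Walk x z := fun z => (hpc z).choose
  have hpcp : ∀ z, (pc z).IsPath := fun z => (hpc z).choose_spec
  haveI hSne : Nonempty {z : α // Same G x z y} := ⟨⟨y, same_refl hy.ne'⟩⟩
  obtain ⟨z0, hmax⟩ := Finite.exists_max (fun z : {z : α // Same G x z y} => (pc z.1).length)
  by_cases hzV : z0.1 ∈ V
  · exact ⟨z0.1, hzV, z0.2⟩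
  exfalso
  have hznx : z0.1 ≠ x := z0.2.ne_left
  -- every neighbor of z0 lies on the path from x to z0
  have hnb : ∀ w, G.Adj z0.1 w → w ∈ (pc z0.1).support := by
    intro w hw
    by_contra hws
    have hwx : w ≠ x := fun he => hws (by rw [he]; exact (pc z0.1).start_mem_support)
    have hq : ((pc z0.1).concat hw).IsPath := by
      rw [Walk.isPath_def, Walk.support_concat, List.nodup_append']
      refine ⟨(hpcp z0.1).support_nodup, by simp, ?_⟩
      intro a ha hb
      simp only [List.mem_singleton] at hb
      subst hb
      exact hws ha
    have hwS : Same G x w y := (Same.symm (adj_same hw hznx hwx)).trans z0.2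
    have hlen := hmax ⟨w, hwS⟩
    have he : pc w = (pc z0.1).concat hw := (hG.existsUnique_path x w).unique (hpcp w) hq
    rw [he, Walk.length_concat] at hlen
    omega
  -- each neighbor of z0 must be the source of the final dart of that path
  have hlast : ∀ w, (hw : G.Adj z0.1 w) →
      (pc z0.1).darts.getLast? = some ⟨(w, z0.1), hw.symm⟩ := by
    intro w hw
    have hws := hnb w hw
    have hdrop : (pc z0.1).dropUntil w hws = Walk.cons hw.symm Walk.nil :=
      (hG.existsUnique_path w z0.1).unique ((hpcp z0.1).dropUntil hws)
        (by rw [Walk.cons_isPath_iff]; simp [hw.ne'])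
    have hds : (pc z0.1).darts =
        ((pc z0.1).takeUntil w hws).darts ++ [⟨(w, z0.1), hw.symm⟩] := by
      conv_lhs => rw [← Walk.take_spec (pc z0.1) hws]
      rw [Walk.darts_append, hdrop]
      rfl
    rw [hds]
    exact List.getLast?_concat
  have h3 := hdeg z0.1 hzV
  have h1lt : 1 < (G.neighborSet z0.1).ncard := by omega
  obtain ⟨a, b, ha, hb, hab⟩ := (Set.one_lt_ncard_iff (Set.toFinite _)).1 h1lt
  have ha' : G.Adj z0.1 a := ha
  have hb' : G.Adj z0.1 b := hb
  have heq := (hlast a ha').symm.trans (hlast b hb')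
  simp only [Option.some.injEq] at heq
  exact hab (congrArg (fun dd => dd.toProd.1) heq)

lemma div_mul_le_half {dv L ε : ℝ} (hd : 0 ≤ dv) (hε : 0 ≤ ε) (hLε : 2 * ε ≤ L) :
    dv / L * ε ≤ dv / 2 := by
  rcases eq_or_lt_of_le (show (0:ℝ) ≤ L by linarith) with h | h
  · rw [← h, div_zero, zero_mul]
    positivity
  · have h2 : ε ≤ L / 2 := by linarith
    calc dv / L * ε ≤ dv / L * (L / 2) :=
          mul_le_mul_of_nonneg_left h2 (div_nonneg hd h.le)
      _ = dv / 2 := by field_simp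

lemma div_le_const {dv L c : ℝ} (hd : 0 ≤ dv) (h : dv ≤ c * L) (hc : 0 ≤ c) (hL : 0 ≤ L) :
    dv / L ≤ c := by
  rcases eq_or_lt_of_le hL with h0 | h0
  · rw [← h0, div_zero]
    exact hc
  · rw [div_le_iff₀ h0]
    linarith

end SteinerAux

open SteinerAux

/-- **Every Steiner node is `30ε`-close to a non-Steiner node.** Let `L ≥ 2ε ≥ 0`. Let `T̂` be
a finite tree on vertex set `X` with tree metric `d̂`, in which every Steiner node (vertex
outside the nonempty set `V ⊆ X`) has degree at least `3`. Let `T` be a finite tree on `V`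
with edge lengths at most `L` and tree metric `d` satisfying
`|d(u,v) − d̂(u,v)| ≤ (d(u,v)/L + 1)·ε` for all `u, v ∈ V`. Then every vertex `x ∈ X` has some
`v ∈ V` with `d̂(x,v) ≤ 30ε`. -/
theorem steiner_nodes_close
    {X : Type*} [Finite X] (V : Set X) (hVne : V.Nonempty)
    (L ε : ℝ) (hε : 0 ≤ ε) (hLε : 2 * ε ≤ L)
    (That : SimpleGraph X) (ℓhat : X → X → ℝ) (dhat : X → X → ℝ)
    (hdhat : IsTreeMetric That ℓhat dhat)
    (hdeg : ∀ x : X, x ∉ V → 3 ≤ (That.neighborSet x).ncard)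
    (T : SimpleGraph ↥V) (ℓ : ↥V → ↥V → ℝ) (d : ↥V → ↥V → ℝ)
    (hd : IsTreeMetric T ℓ d)
    (hedge : ∀ u v : ↥V, T.Adj u v → ℓ u v ≤ L)
    (happrox : ∀ u v : ↥V, |d u v - dhat (u : X) (v : X)| ≤ (d u v / L + 1) * ε) :
    ∀ x : X, ∃ v ∈ V, dhat x v ≤ 30 * ε := by
  intro x
  by_cases hxV : x ∈ V
  · exact ⟨x, hxV, by rw [tm_refl hdhat x]; linarith⟩
  have hG : That.IsTree := hdhat.1
  have hT : T.IsTree := hd.1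
  have hL0 : (0:ℝ) ≤ L := by linarith
  have hne : ∀ s : ↥V, (s : X) ≠ x := fun s h => hxV (h ▸ s.2)
  -- three distinct neighbors of x
  obtain ⟨t, hts, ht3⟩ := Set.exists_subset_card_eq (hdeg x hxV)
  rw [Set.ncard_eq_three] at ht3
  obtain ⟨y1, y2, y3, h12, h13, h23, rfl⟩ := ht3
  have hy1 : That.Adj x y1 := hts (by simp)
  have hy2 : That.Adj x y2 := hts (by simp)
  have hy3 : That.Adj x y3 := hts (by simp)
  -- V-points in each branch
  obtain ⟨w1, hw1V, hw1⟩ := branch_has_V hG V hdeg hy1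
  obtain ⟨w2, hw2V, hw2⟩ := branch_has_V hG V hdeg hy2
  obtain ⟨w3, hw3V, hw3⟩ := branch_has_V hG V hdeg hy3
  -- points in different branches are not on the same side of x
  have hdiff : ∀ {ya yb : X} {u v : X}, That.Adj x ya → That.Adj x yb → ya ≠ yb →
      Same That x u ya → Same That x v yb → ¬ Same That x u v := by
    intro ya yb u v hA hB hab hu hvb hscontra
    exact neighbors_not_same hG hA hB hab ((hu.symm.trans hscontra).trans hvb)
  -- crossing edges of T have both endpoints close to x
  have cross : ∀ (s t : ↥V), ¬ Same That x ↑s ↑t →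
      ∃ z1 z2 : ↥V, T.Adj z1 z2 ∧ Same That x ↑z1 ↑s ∧ ¬ Same That x ↑z2 ↑s ∧
        dhat x ↑z1 ≤ L + 2 * ε ∧ dhat x ↑z2 ≤ L + 2 * ε := by
    intro s t hst
    obtain ⟨p, hp⟩ := exists_path hT.isConnected s t
    obtain ⟨z1, z2, hadj, hQ1, hQ2⟩ := exists_change (fun z : ↥V => Same That x ↑z ↑s) p
        (same_refl (hne s)) (fun h => hst h.symm)
    have hn12 : ¬ Same That x ↑z1 ↑z2 := fun h => hQ2 (h.symm.trans hQ1)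
    have hsplit := not_same_split hdhat hn12
    have hdz : d z1 z2 = ℓ z1 z2 := tm_adj hd hadj
    have hdzL : d z1 z2 ≤ L := by rw [hdz]; exact hedge _ _ hadj
    have hdz0 : 0 ≤ d z1 z2 := tm_nonneg hd _ _
    have hq : d z1 z2 / L ≤ 1 := div_le_const hdz0 (by linarith) zero_le_one hL0
    have hb := abs_le.1 (happrox z1 z2)
    have hBd : (d z1 z2 / L + 1) * ε ≤ 2 * ε :=
      mul_le_mul_of_nonneg_right (by linarith) hε
    have h1 : 0 ≤ dhat ↑z1 x := tm_nonneg hdhat _ _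
    have h2 : 0 ≤ dhat x ↑z2 := tm_nonneg hdhat _ _
    have hsym : dhat x ↑z1 = dhat ↑z1 x := tm_symm hdhat _ _
    exact ⟨z1, z2, hadj, hQ1, hQ2, by linarith [hb.1], by linarith [hb.1]⟩
  -- crossing pair between branch 1 and branch 2
  have hns : ¬ Same That x ↑(⟨w1, hw1V⟩ : ↥V) ↑(⟨w2, hw2V⟩ : ↥V) := hdiff hy1 hy2 h12 hw1 hw2
  obtain ⟨z1, z2, hadjz, hz1, hz2, hb1, hb2⟩ := cross ⟨w1, hw1V⟩ ⟨w2, hw2V⟩ hns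
  have hz1y : Same That x ↑z1 y1 := hz1.trans hw1
  -- find a third branch avoiding both z1's branch (= y1's) and z2's branch
  have hk : ∃ (yk : X) (wk : X) (hwkV : wk ∈ V), That.Adj x yk ∧ y1 ≠ yk ∧
      Same That x wk yk ∧ ¬ Same That x ↑z2 yk := by
    by_cases h2k : Same That x ↑z2 y2
    · exact ⟨y3, w3, hw3V, hy3, h13, hw3, fun h =>
        neighbors_not_same hG hy2 hy3 h23 (h2k.symm.trans h)⟩
    · exact ⟨y2, w2, hw2V, hy2, h12, hw2, h2k⟩
  obtain ⟨yk, wk, hwkV, hyk, h1k, hskk, hz2k⟩ := hk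
  -- a point of V in branch yk that is close to x
  have hns2 : ¬ Same That x ↑(⟨wk, hwkV⟩ : ↥V) ↑(⟨w1, hw1V⟩ : ↥V) :=
    hdiff hyk hy1 (Ne.symm h1k) hskk hw1
  obtain ⟨m3, m3', hadjm, hm3k, _, hbm3, _⟩ := cross ⟨wk, hwkV⟩ ⟨w1, hw1V⟩ hns2
  have hm3y : Same That x ↑m3 yk := hm3k.trans hskk
  -- the three points m3, z1, z2 are in pairwise different branches
  have hA : ¬ Same That x ↑m3 ↑z1 := hdiff hyk hy1 (Ne.symm h1k) hm3y hz1y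
  have hB : ¬ Same That x ↑m3 ↑z2 := fun h => hz2k (h.symm.trans hm3y)
  have hC : ¬ Same That x ↑z1 ↑z2 := fun h => hz2 (h.symm.trans hz1)
  -- the main estimate
  have final : ∀ b f : ↥V, T.Adj b f → ¬ Same That x ↑m3 ↑b → ¬ Same That x ↑m3 ↑f →
      ¬ Same That x ↑b ↑f → d m3 b + d b f = d m3 f → dhat x ↑f ≤ L + 2 * ε →
      dhat x ↑b ≤ 30 * ε := by
    intro b f hbf hMb hMf hbfS hrel hFb
    have s1' := not_same_split hdhat hMb
    have s2' := not_same_split hdhat hbfS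
    have s3' := not_same_split hdhat hMf
    have sy1 : dhat ↑b x = dhat x ↑b := tm_symm hdhat _ _
    have sy2 : dhat ↑m3 x = dhat x ↑m3 := tm_symm hdhat _ _
    have hdbf : d b f = ℓ b f := tm_adj hd hbf
    have hdbfL : d b f ≤ L := by rw [hdbf]; exact hedge _ _ hbf
    have hdbf0 : 0 ≤ d b f := tm_nonneg hd _ _
    have hd3f0 : 0 ≤ d m3 f := tm_nonneg hd _ _
    have hd3b0 : 0 ≤ d m3 b := tm_nonneg hd _ _
    have hhat3f : dhat ↑m3 ↑f ≤ 4 * L := by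
      rw [← s3']
      linarith
    have e3 := abs_le.1 (happrox m3 f)
    have hmul := div_mul_le_half hd3f0 hε hLε
    have hexp : (d m3 f / L + 1) * ε = d m3 f / L * ε + ε := by ring
    have hd3f9 : d m3 f ≤ 9 * L := by
      have h' := e3.2
      rw [hexp] at h'
      linarith
    have hd3b9 : d m3 b ≤ 9 * L := by linarith
    have q1 : d m3 b / L ≤ 9 := div_le_const hd3b0 (by linarith) (by norm_num) hL0
    have q2 : d b f / L ≤ 1 := div_le_const hdbf0 (by linarith) zero_le_one hL0
    have q3 : d m3 f / L ≤ 9 := div_le_const hd3f0 (by linarith) (by norm_num) hL0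
    have e1 := abs_le.1 (happrox m3 b)
    have e2 := abs_le.1 (happrox b f)
    have mm1 : (d m3 b / L + 1) * ε ≤ 10 * ε := mul_le_mul_of_nonneg_right (by linarith) hε
    have mm2 : (d b f / L + 1) * ε ≤ 2 * ε := mul_le_mul_of_nonneg_right (by linarith) hε
    have mm3 : (d m3 f / L + 1) * ε ≤ 10 * ε := mul_le_mul_of_nonneg_right (by linarith) hε
    linarith [e1.1, e2.1, e3.2, mm1, mm2, mm3]
  -- locate z2 relative to the T-path from m3 to z1 and conclude
  obtain ⟨q, hq⟩ := exists_path hT.isConnected m3 z1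
  by_cases hmem : z2 ∈ q.support
  · have hrel : d m3 z2 + d z2 z1 = d m3 z1 := tm_split hd q hq hmem
    exact ⟨↑z2, z2.2, final z2 z1 hadjz.symm hB hA (fun h => hC h.symm) hrel hb1⟩
  · have hcp : (q.concat hadjz).IsPath := by
      rw [Walk.isPath_def, Walk.support_concat, List.nodup_append']
      refine ⟨hq.support_nodup, by simp, ?_⟩
      intro a ha hb'
      simp only [List.mem_singleton] at hb'
      subst hb'
      exact hmem ha
    have hrel : d m3 z1 + d z1 z2 = d m3 z2 := by
      have h1 : d m3 z2 = wsum ℓ (q.concat hadjz) := tm_eval hd _ hcp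
      have h2 : wsum ℓ (q.concat hadjz) = wsum ℓ q + ℓ z1 z2 := by
        rw [Walk.concat_eq_append, wsum_append, wsum_edge]
      rw [tm_eval hd q hq, tm_adj hd hadjz, ← h2, ← h1]
    exact ⟨↑z1, z1.2, final z1 z2 hadjz hA hB hC hrel hb2⟩
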